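/- Assume the negation of the Continuum Hypothesis (2^ℵ0 > ℵ1). Then for every ℵ0-coloring of the real numbers, there exist four pairwise distinct reals e1, e2, e3, e4 of the same color such that e1 + e2 = e3 + e4. -/

import Mathlib

open Cardinal

/-- Among three distinct reals, some pair avoids a fixed nonzero translation `c`
in both directions. -/
private lemma good_pair_aux (c u1 u2 u3 : ℝ) (hc : c ≠ 0) (h12 : u1 ≠ u2)
    (h13 : u1 ≠ u3) (h23 : u2 ≠ u3) :
    ∃ u ∈ ({u1, u2, u3} : Set ℝ), ∃ v ∈ ({u1, u2, u3} : Set ℝ),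
      u ≠ v ∧ u ≠ v + c ∧ v ≠ u + c := by
  by_cases p12 : u1 ≠ u2 + c ∧ u2 ≠ u1 + c
  · exact ⟨u1, by simp, u2, by simp, h12, p12.1, p12.2⟩
  by_cases p13 : u1 ≠ u3 + c ∧ u3 ≠ u1 + c
  · exact ⟨u1, by simp, u3, by simp, h13, p13.1, p13.2⟩
  by_cases p23 : u2 ≠ u3 + c ∧ u3 ≠ u2 + c
  · exact ⟨u2, by simp, u3, by simp, h23, p23.1, p23.2⟩
  exfalso
  rw [not_and_or, not_ne_iff, not_ne_iff] at p12 p13 p23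
  rcases p12 with h | h <;> rcases p13 with h' | h' <;> rcases p23 with h'' | h'' <;>
    first
      | exact hc (by linarith)
      | exact h12 (by linarith)
      | exact h13 (by linarith)
      | exact h23 (by linarith)

/-- In an uncountable type, any `ℕ`-valued map has a fiber with (at least)
three distinct elements. -/
private lemma exists_three_fiber {α : Type} [Uncountable α] (g : α → ℕ) :
    ∃ n, ∃ b1 b2 b3 : α, b1 ≠ b2 ∧ b1 ≠ b3 ∧ b2 ≠ b3 ∧
      g b1 = n ∧ g b2 = n ∧ g b3 = n := by
  obtain ⟨n, hn⟩ : ∃ n, (g ⁻¹' {n}).Infinite := by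
    by_contra h
    push_neg at h
    have hcu : (Set.univ : Set α).Countable := by
      have he : (⋃ n, g ⁻¹' {n}) = Set.univ := by ext a; simp
      rw [← he]
      exact Set.countable_iUnion fun n => (h n).countable
    exact (Set.not_countable_univ_iff.mpr ‹Uncountable α›) hcu
  obtain ⟨b1, hb1⟩ := hn.nonempty
  obtain ⟨b2, hb2⟩ := (hn.diff (Set.finite_singleton b1)).nonempty
  obtain ⟨b3, hb3⟩ := (hn.diff (Set.toFinite {b1, b2})).nonempty
  simp only [Set.mem_diff, Set.mem_preimage, Set.mem_singleton_iff, Set.mem_insert_iff,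
    not_or] at hb1 hb2 hb3
  exact ⟨n, b1, b2, b3, fun e => hb2.2 e.symm, fun e => hb3.2.1 e.symm,
    fun e => hb3.2.2 e.symm, hb1, hb2.1, hb3.1⟩

/-- Assuming the negation of CH, every `ℵ₀`-coloring of `ℝ` admits four pairwise
distinct monochromatic reals with `e1 + e2 = e3 + e4`. -/
theorem not_CH_implies_S (nch : Cardinal.aleph 1 < (2 : Cardinal) ^ Cardinal.aleph0) :
    ∀ COL : ℝ → ℕ,
      ∃ e1 e2 e3 e4 : ℝ,
        e1 ≠ e2 ∧ e1 ≠ e3 ∧ e1 ≠ e4 ∧ e2 ≠ e3 ∧ e2 ≠ e4 ∧ e3 ≠ e4 ∧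
        COL e1 = COL e2 ∧ COL e2 = COL e3 ∧ COL e3 = COL e4 ∧
        e1 + e2 = e3 + e4 := by
  intro COL
  classical
  -- transfer the hypothesis to universe 0
  have nch0 : Cardinal.aleph.{0} 1 < (2 : Cardinal.{0}) ^ Cardinal.aleph0.{0} := by
    rw [two_power_aleph0] at nch ⊢
    rw [← lift_lt.{0}, lift_continuum, lift_aleph]
    simpa using nch
  rw [two_power_aleph0, ← Cardinal.mk_real] at nch0
  -- ℵ₂ many reals
  have h2 : Cardinal.aleph.{0} 2 ≤ Cardinal.mk ℝ := by
    have : Cardinal.aleph.{0} 2 = Order.succ (Cardinal.aleph.{0} 1) := by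
      rw [← Cardinal.aleph_succ]
      norm_num [← Ordinal.add_one_eq_succ]
    rw [this]
    exact Order.succ_le_of_lt nch0
  obtain ⟨x⟩ : Nonempty ((Cardinal.aleph.{0} 2).out ↪ ℝ) := by
    rw [← Cardinal.le_def]
    rwa [Cardinal.mk_out]
  obtain ⟨y⟩ : Nonempty ((Cardinal.aleph.{0} 1).out ↪ ℝ) := by
    rw [← Cardinal.le_def]
    rw [Cardinal.mk_out]
    exact nch0.le
  set O2 := (Cardinal.aleph.{0} 2).out
  set O1 := (Cardinal.aleph.{0} 1).out
  have hO1unc : Uncountable O1 := by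
    rw [← Cardinal.aleph0_lt_mk_iff, Cardinal.mk_out]
    exact aleph0_lt_aleph_one
  -- for each `a : O2`, three `b`'s giving the same color
  have H : ∀ a : O2, ∃ n, ∃ b1 b2 b3 : O1, b1 ≠ b2 ∧ b1 ≠ b3 ∧ b2 ≠ b3 ∧
      COL (x a + y b1) = n ∧ COL (x a + y b2) = n ∧ COL (x a + y b3) = n :=
    fun a => exists_three_fiber fun b => COL (x a + y b)
  choose n b1 b2 b3 h12 h13 h23 hc1 hc2 hc3 using H
  -- the map `a ↦ (n a, b1 a, b2 a, b3 a)` cannot be injective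
  have hninj : ¬ Function.Injective (fun a : O2 => (n a, b1 a, b2 a, b3 a)) := by
    intro hinj
    have hle := Cardinal.mk_le_of_injective hinj
    have hcod : Cardinal.mk (ℕ × O1 × O1 × O1) ≤ Cardinal.aleph.{0} 1 := by
      have e1 : Cardinal.mk (O1 × O1) = Cardinal.aleph.{0} 1 := by
        simp only [Cardinal.mk_prod, Cardinal.lift_id, O1, Cardinal.mk_out]
        exact Cardinal.mul_eq_self (aleph0_le_aleph 1)
      have e2 : Cardinal.mk (O1 × O1 × O1) = Cardinal.aleph.{0} 1 := by
        simp only [Cardinal.mk_prod, Cardinal.lift_id, O1, Cardinal.mk_out, e1]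
        exact Cardinal.mul_eq_self (aleph0_le_aleph 1)
      simp only [Cardinal.mk_prod, Cardinal.lift_id, Cardinal.mk_nat, e2]
      rw [Cardinal.mul_eq_max le_rfl (aleph0_le_aleph 1)]
      exact le_of_eq (max_eq_right (aleph0_le_aleph 1))
    have hcontra : Cardinal.aleph.{0} 2 ≤ Cardinal.aleph.{0} 1 := by
      calc Cardinal.aleph.{0} 2 = Cardinal.mk O2 := (Cardinal.mk_out _).symm
        _ ≤ Cardinal.mk (ℕ × O1 × O1 × O1) := hle
        _ ≤ Cardinal.aleph.{0} 1 := hcod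
    have : (2 : Ordinal) ≤ 1 := Cardinal.aleph_le_aleph.mp hcontra
    norm_num at this
  obtain ⟨a, a', heq, hne⟩ := Function.not_injective_iff.mp hninj
  simp only [Prod.mk.injEq] at heq
  obtain ⟨hn, hb1, hb2, hb3⟩ := heq
  -- set up the four reals
  have hAA' : x a ≠ x a' := fun h => hne (x.injective h)
  have hcne : x a' - x a ≠ 0 := sub_ne_zero.mpr (Ne.symm hAA')
  have hu12 : y (b1 a) ≠ y (b2 a) := fun h => h12 a (y.injective h)
  have hu13 : y (b1 a) ≠ y (b3 a) := fun h => h13 a (y.injective h)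
  have hu23 : y (b2 a) ≠ y (b3 a) := fun h => h23 a (y.injective h)
  obtain ⟨u, hu, v, hv, huv, hg1, hg2⟩ :=
    good_pair_aux (x a' - x a) (y (b1 a)) (y (b2 a)) (y (b3 a)) hcne hu12 hu13 hu23
  have hcolA : ∀ w ∈ ({y (b1 a), y (b2 a), y (b3 a)} : Set ℝ), COL (x a + w) = n a := by
    rintro w (rfl | rfl | rfl)
    · exact hc1 a
    · exact hc2 a
    · exact hc3 a
  have hcolA' : ∀ w ∈ ({y (b1 a), y (b2 a), y (b3 a)} : Set ℝ), COL (x a' + w) = n a := by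
    rintro w (rfl | rfl | rfl)
    · rw [hb1]; rw [hn]; exact hc1 a'
    · rw [hb2]; rw [hn]; exact hc2 a'
    · rw [hb3]; rw [hn]; exact hc3 a'
  refine ⟨x a + u, x a' + v, x a + v, x a' + u, ?_, ?_, ?_, ?_, ?_, ?_, ?_, ?_, ?_, by ring⟩
  · intro h; exact hg1 (by linarith)
  · intro h; exact huv (by linarith)
  · intro h; exact hAA' (by linarith)
  · intro h; exact hAA' (by linarith)
  · intro h; exact huv (by linarith)
  · intro h; exact hg2 (by linarith)
  · rw [hcolA u hu, hcolA' v hv]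
  · rw [hcolA' v hv, hcolA v hv]
  · rw [hcolA v hv, hcolA' u hu]
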